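/- In the dynamic network creation game in which players' communication cost uses the temporal shortest distance, for every real atomic cost α with 0 < α ≤ 2 and every number of players n ≥ 2, the optimal social cost equals c*(α, n) = (α+2)·n(n−1)/2, and it is achieved by any strategy profile whose communication temporal graph is the complete graph K_n equipped with any simple labelling. -/

import Mathlib

open scoped ENNReal BigOperators

/-- A temporal path from `u` to `v`, given as a list of steps `(next vertex, time label)`.
The labelling `lab` gives, for each (ordered) pair of vertices, the set of time labels of the
edge joining them (empty if there is no edge); it is symmetric for temporal graphs arising
from strategy profiles.  The conditions say that consecutive steps use time labels belonging
to the corresponding edge, that time labels strictly increase along the path, that no vertex is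
repeated, and that the path ends at `v`. -/
def IsTemporalPath {V : Type*} (lab : V → V → Set ℕ) (u v : V) (p : List (V × ℕ)) : Prop :=
  List.Chain (fun a b => b.2 ∈ lab a.1 b.1) (u, 0) p ∧
  List.Chain' (· < ·) (p.map Prod.snd) ∧
  (u :: p.map Prod.fst).Nodup ∧
  (u :: p.map Prod.fst).getLast (List.cons_ne_nil _ _) = v

/-- The temporal shortest distance from `u` to `v`: the least number of edges of a temporal
path from `u` to `v` (`0` if `u = v`, `⊤` if there is no temporal path). -/
noncomputable def temporalDist {V : Type*} (lab : V → V → Set ℕ) (u v : V) : ℕ∞ :=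
  sInf {n : ℕ∞ | ∃ p : List (V × ℕ), IsTemporalPath lab u v p ∧ (p.length : ℕ∞) = n}

/-- The labelling of the communication temporal graph `𝒢[s]` of a strategy profile `s`:
`t` is a label of the edge `uv` iff `(u, t) ∈ s v` or `(v, t) ∈ s u`. -/
def profLab {V : Type*} (s : V → Finset (V × ℕ)) : V → V → Set ℕ :=
  fun u v => {t | (u, t) ∈ s v ∨ (v, t) ∈ s u}

/-- The (finite) set of time labels of the edge `uv` in the communication temporal graph. -/
def labelFinset {V : Type*} [DecidableEq V] (s : V → Finset (V × ℕ)) (u v : V) : Finset ℕ :=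
  (((s v).filter (fun p => p.1 = u)).image Prod.snd) ∪
    (((s u).filter (fun p => p.1 = v)).image Prod.snd)

/-- The total number of time labels `∑ e ∈ E, |λ(e)|` of the communication temporal graph
(each unordered pair is counted once, whence the division by `2`). -/
def numLabels {V : Type*} [Fintype V] [DecidableEq V] (s : V → Finset (V × ℕ)) : ℕ :=
  (∑ u : V, ∑ v : V, if u = v then 0 else (labelFinset s u v).card) / 2

/-- The number of edges `|E|` of the communication temporal graph. -/
def numEdges {V : Type*} [Fintype V] [DecidableEq V] (s : V → Finset (V × ℕ)) : ℕ :=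
  ((Finset.univ : Finset (V × V)).filter
    (fun q => q.1 ≠ q.2 ∧ (labelFinset s q.1 q.2).Nonempty)).card / 2

/-- The social cost `c[s] = α·∑_{e ∈ E} |λ(e)| + ∑_{(u,v) ∈ V×V} d_{𝒢[s]}(u,v)`
of a strategy profile `s` for atomic cost `α`. -/
noncomputable def socialCost {V : Type*} [Fintype V] [DecidableEq V]
    (α : ℝ) (s : V → Finset (V × ℕ)) : ℝ≥0∞ :=
  ENNReal.ofReal α * (numLabels s : ℝ≥0∞) +
    ∑ u : V, ∑ v : V, (temporalDist (profLab s) u v : ℝ≥0∞)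

/-- The individual cost `c[s](v) = α·|s(v)| + ∑_{w ∈ V} d_{𝒢[s]}(v,w)` of player `v`. -/
noncomputable def indivCost {V : Type*} [Fintype V]
    (α : ℝ) (s : V → Finset (V × ℕ)) (v : V) : ℝ≥0∞ :=
  ENNReal.ofReal α * ((s v).card : ℝ≥0∞) +
    ∑ w : V, (temporalDist (profLab s) v w : ℝ≥0∞)

/-- A strategy profile is a Nash equilibrium if no player can strictly decrease its individual
cost by changing only its own strategy. -/
def IsNash {V : Type*} [Fintype V] [DecidableEq V] (α : ℝ) (s : V → Finset (V × ℕ)) : Prop :=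
  ∀ (v : V) (t : Finset (V × ℕ)),
    ¬ indivCost α (Function.update s v t) v < indivCost α s v

/-- The optimal social cost `c*(α, n)`: the minimum social cost over all strategy profiles
with `n` players and atomic cost `α`. -/
noncomputable def optCost (α : ℝ) (n : ℕ) : ℝ≥0∞ :=
  ⨅ s : Fin n → Finset (Fin n × ℕ), socialCost α s

/-- The price of anarchy `PoA(α, n)`: the maximum social cost of a Nash equilibrium with `n`
players and atomic cost `α`, divided by the optimal social cost `c*(α, n)`. -/
noncomputable def PoA (α : ℝ) (n : ℕ) : ℝ≥0∞ :=
  (⨆ s : {s : Fin n → Finset (Fin n × ℕ) // IsNash α s}, socialCost α s.1) / optCost α n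

/-- The price of stability `PoS(α, n)`: the minimum social cost of a Nash equilibrium with `n`
players and atomic cost `α`, divided by the optimal social cost `c*(α, n)`. -/
noncomputable def PoS (α : ℝ) (n : ℕ) : ℝ≥0∞ :=
  (⨅ s : {s : Fin n → Finset (Fin n × ℕ) // IsNash α s}, socialCost α s.1) / optCost α n

section Lemmas

variable {V : Type*}

lemma temporalDist_self (lab : V → V → Set ℕ) (u : V) : temporalDist lab u u = 0 := by
  refine le_antisymm (sInf_le ?_) zero_le
  exact ⟨[], ⟨List.Chain.nil, List.isChain_nil, by simp, rfl⟩, rfl⟩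

lemma one_le_temporalDist (lab : V → V → Set ℕ) {u v : V} (h : u ≠ v) :
    1 ≤ temporalDist lab u v := by
  refine le_sInf fun b hb => ?_
  obtain ⟨p, hp, rfl⟩ := hb
  rcases p with _ | ⟨a, q⟩
  · exact absurd hp.2.2.2 h
  · simp [Nat.one_le_iff_ne_zero]

lemma temporalDist_le_one (lab : V → V → Set ℕ) {u v : V} {t : ℕ} (ht : t ∈ lab u v)
    (h : u ≠ v) : temporalDist lab u v ≤ 1 := by
  refine sInf_le ⟨[(v, t)], ⟨?_, ?_, ?_, ?_⟩, rfl⟩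
  · exact List.Chain.cons ht List.Chain.nil
  · exact List.isChain_singleton t
  · simp [h]
  · rfl

lemma two_le_temporalDist (lab : V → V → Set ℕ) {u v : V} (hlab : ∀ t, t ∉ lab u v)
    (h : u ≠ v) : 2 ≤ temporalDist lab u v := by
  refine le_sInf fun b hb => ?_
  obtain ⟨p, hp, rfl⟩ := hb
  rcases p with _ | ⟨⟨w, t⟩, q⟩
  · exact absurd hp.2.2.2 h
  rcases q with _ | ⟨a, r⟩
  · have hw : w = v := hp.2.2.2
    have := (List.chain_cons.mp hp.1).1
    exact absurd this (hw ▸ hlab t)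
  · have h2 : 2 ≤ (((w, t) :: a :: r).length : ℕ) := by simp
    exact_mod_cast h2

lemma mem_labelFinset [DecidableEq V] (s : V → Finset (V × ℕ)) (u v : V) (t : ℕ) :
    t ∈ labelFinset s u v ↔ ((u, t) ∈ s v ∨ (v, t) ∈ s u) := by
  simp only [labelFinset, Finset.mem_union, Finset.mem_image, Finset.mem_filter]
  constructor
  · rintro (⟨⟨a, b⟩, ⟨hm, rfl⟩, rfl⟩ | ⟨⟨a, b⟩, ⟨hm, rfl⟩, rfl⟩)
    · exact Or.inl hm
    · exact Or.inr hm
  · rintro (hm | hm)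
    · exact Or.inl ⟨(u, t), ⟨hm, rfl⟩, rfl⟩
    · exact Or.inr ⟨(v, t), ⟨hm, rfl⟩, rfl⟩

lemma even_sym_sum [Fintype V] [LinearOrder V] (f : V → V → ℕ)
    (hsymm : ∀ u v, f u v = f v u) (hdiag : ∀ u, f u u = 0) :
    Even (∑ u : V, ∑ v : V, f u v) := by
  have h1 : ∑ u : V, ∑ v : V, f u v = ∑ x ∈ (Finset.univ ×ˢ Finset.univ), f x.1 x.2 := by
    rw [Finset.sum_product]
  rw [h1, ← Finset.sum_filter_add_sum_filter_not _ (fun x => x.1 < x.2)]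
  have h2 : ∑ x ∈ (Finset.univ ×ˢ Finset.univ).filter (fun x => ¬ x.1 < x.2), f x.1 x.2
      = ∑ x ∈ (Finset.univ ×ˢ Finset.univ).filter (fun x => x.2 < x.1), f x.1 x.2 := by
    refine (Finset.sum_subset ?_ ?_).symm
    · intro x hx
      simp only [Finset.mem_filter] at hx ⊢
      exact ⟨hx.1, not_lt_of_gt hx.2⟩
    · intro x hx hx'
      simp only [Finset.mem_filter] at hx hx'
      have hle : x.1 = x.2 := le_antisymm
        (not_lt.mp (fun h => hx' ⟨hx.1, h⟩)) (not_lt.mp hx.2)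
      rw [show f x.1 x.2 = f x.1 x.1 from by rw [hle], hdiag]
  rw [h2]
  have h3 : ∑ x ∈ (Finset.univ ×ˢ Finset.univ).filter (fun x => x.2 < x.1), f x.1 x.2
      = ∑ x ∈ (Finset.univ ×ˢ Finset.univ).filter (fun x => x.1 < x.2), f x.1 x.2 := by
    refine Finset.sum_nbij' (fun x => (x.2, x.1)) (fun x => (x.2, x.1)) ?_ ?_ ?_ ?_ ?_ <;>
      simp +contextual [hsymm _ _]
  rw [h3]
  exact ⟨_, rfl⟩

end Lemmas

section Main

lemma mem_profLab {V : Type*} (s : V → Finset (V × ℕ)) (u v : V) (t : ℕ) :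
    t ∈ profLab s u v ↔ ((u, t) ∈ s v ∨ (v, t) ∈ s u) := Iff.rfl

lemma labelFinset_comm {V : Type*} [DecidableEq V] (s : V → Finset (V × ℕ)) (u v : V) :
    labelFinset s u v = labelFinset s v u := Finset.union_comm _ _

lemma sum_ite_offdiag {V M : Type*} [AddCommMonoid M] [Fintype V] [DecidableEq V] (x : M) :
    ∑ u : V, ∑ v : V, (if u = v then (0 : M) else x)
      = (Fintype.card V * (Fintype.card V - 1)) • x := by
  have h1 : ∀ u : V, ∑ v : V, (if u = v then (0 : M) else x) = (Fintype.card V - 1) • x := by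
    intro u
    rw [← Finset.sum_erase_add _ _ (Finset.mem_univ u), if_pos rfl, add_zero]
    rw [Finset.sum_congr rfl (fun v hv => if_neg (Ne.symm (Finset.ne_of_mem_erase hv)))]
    rw [Finset.sum_const, Finset.card_erase_of_mem (Finset.mem_univ u), Finset.card_univ]
  simp only [h1]
  rw [Finset.sum_const, Finset.card_univ, smul_smul]

lemma target_eq {n : ℕ} (hn : 1 ≤ n) (α : ℝ) :
    ENNReal.ofReal ((α + 2) * n * ((n : ℝ) - 1) / 2)
      = (n * (n - 1)) • ENNReal.ofReal ((α + 2) / 2) := by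
  rw [nsmul_eq_mul, ← ENNReal.ofReal_natCast, ← ENNReal.ofReal_mul (by positivity)]
  congr 1
  have h : ((n * (n - 1) : ℕ) : ℝ) = n * ((n : ℝ) - 1) := by
    push_cast [Nat.cast_sub hn]
    ring
  rw [h]; ring

lemma two_dvd_aux (n : ℕ) : 2 ∣ n * (n - 1) := by
  rcases n with _ | k
  · simp
  · have h := Nat.even_mul_succ_self k
    simpa [Nat.succ_sub_one, mul_comm] using h.two_dvd

lemma socialCost_eq_of_simple {n : ℕ} (hn : 1 ≤ n) (α : ℝ) (hα0 : 0 ≤ α)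
    (s : Fin n → Finset (Fin n × ℕ))
    (hs : ∀ u v : Fin n, u ≠ v → (labelFinset s u v).card = 1) :
    socialCost α s = ENNReal.ofReal ((α + 2) * n * ((n : ℝ) - 1) / 2) := by
  classical
  have hdist : ∀ u v : Fin n,
      temporalDist (profLab s) u v = if u = v then 0 else 1 := by
    intro u v
    split
    · next h => exact h ▸ temporalDist_self _ _
    · next h =>
      obtain ⟨t, ht⟩ := Finset.card_pos.mp (by rw [hs u v h]; exact one_pos)
      exact le_antisymm
        (temporalDist_le_one _ ((mem_profLab s u v t).mpr ((mem_labelFinset s u v t).mp ht)) h)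
        (one_le_temporalDist _ h)
  have hS : ∑ u : Fin n, ∑ v : Fin n, (if u = v then 0 else (labelFinset s u v).card)
      = n * (n - 1) := by
    have : ∀ u v : Fin n, (if u = v then 0 else (labelFinset s u v).card)
        = if u = v then 0 else 1 := by
      intro u v; split
      · rfl
      · next h => rw [hs u v h]
    simp only [this]
    rw [sum_ite_offdiag, Fintype.card_fin, smul_eq_mul, mul_one]
  have hD : ∑ u : Fin n, ∑ v : Fin n, ((temporalDist (profLab s) u v : ℝ≥0∞))
      = ((n * (n - 1) : ℕ) : ℝ≥0∞) := by
    have : ∀ u v : Fin n, ((temporalDist (profLab s) u v : ℝ≥0∞))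
        = if u = v then 0 else 1 := by
      intro u v; rw [hdist u v]; split <;> simp
    simp only [this]
    rw [sum_ite_offdiag, Fintype.card_fin, nsmul_eq_mul, mul_one]
  have hhalf : ((n * (n - 1) / 2 : ℕ) : ℝ≥0∞)
      = ENNReal.ofReal (((n * (n - 1) : ℕ) : ℝ) / 2) := by
    rw [← ENNReal.ofReal_natCast]
    congr 1
    rw [Nat.cast_div (two_dvd_aux n) (by norm_num)]
    norm_num
  rw [socialCost, numLabels, hS, hD, hhalf, ← ENNReal.ofReal_natCast (n * (n - 1)),
    ← ENNReal.ofReal_mul hα0, ← ENNReal.ofReal_add (by positivity) (by positivity)]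
  congr 1
  have h : ((n * (n - 1) : ℕ) : ℝ) = n * ((n : ℝ) - 1) := by
    push_cast [Nat.cast_sub hn]
    ring
  rw [h]; ring

lemma le_socialCost {n : ℕ} (hn : 1 ≤ n) (α : ℝ) (hα0 : 0 < α) (hα2 : α ≤ 2)
    (s : Fin n → Finset (Fin n × ℕ)) :
    ENNReal.ofReal ((α + 2) * n * ((n : ℝ) - 1) / 2) ≤ socialCost α s := by
  classical
  set c : Fin n → Fin n → ℕ := fun u v => if u = v then 0 else (labelFinset s u v).card with hc
  have heven : Even (∑ u : Fin n, ∑ v : Fin n, c u v) := by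
    refine even_sym_sum c (fun u v => ?_) (fun u => by simp [hc])
    simp only [hc]
    rcases eq_or_ne u v with rfl | h
    · rfl
    · rw [if_neg h, if_neg h.symm, labelFinset_comm]
  set S := ∑ u : Fin n, ∑ v : Fin n, c u v with hSdef
  have hS2 : (S : ℝ≥0∞) = 2 * (numLabels s : ℝ≥0∞) := by
    have : S = 2 * (S / 2) := (Nat.mul_div_cancel' heven.two_dvd).symm
    rw [numLabels, ← hSdef]
    exact_mod_cast this
  have key : ∀ u v : Fin n,
      (if u = v then 0 else ENNReal.ofReal ((α + 2) / 2))
        ≤ ENNReal.ofReal (α / 2) * (c u v : ℝ≥0∞) + (temporalDist (profLab s) u v : ℝ≥0∞) := by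
    intro u v
    rcases eq_or_ne u v with rfl | h
    · simp
    rw [if_neg h]
    by_cases hne : (labelFinset s u v).Nonempty
    · obtain ⟨t, ht⟩ := hne
      have h1 : (1 : ℝ≥0∞) ≤ (c u v : ℝ≥0∞) := by
        have : 1 ≤ c u v := by
          simp only [hc, if_neg h]
          exact Finset.card_pos.mpr ⟨t, ht⟩
        exact_mod_cast this
      have h2 : (1 : ℝ≥0∞) ≤ (temporalDist (profLab s) u v : ℝ≥0∞) := by
        have := one_le_temporalDist (profLab s) h
        exact_mod_cast this
      calc ENNReal.ofReal ((α + 2) / 2) = ENNReal.ofReal (α / 2) + 1 := by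
            rw [← ENNReal.ofReal_one, ← ENNReal.ofReal_add (by positivity) zero_le_one]
            congr 1; ring
        _ ≤ ENNReal.ofReal (α / 2) * (c u v : ℝ≥0∞)
              + (temporalDist (profLab s) u v : ℝ≥0∞) := by
            gcongr
            exact le_mul_of_one_le_right zero_le h1
    · have hemp : ∀ t, t ∉ profLab s u v := by
        intro t hmem
        exact hne ⟨t, (mem_labelFinset s u v t).mpr ((mem_profLab s u v t).mp hmem)⟩
      have h2 : (2 : ℝ≥0∞) ≤ (temporalDist (profLab s) u v : ℝ≥0∞) := by
        have := two_le_temporalDist (profLab s) hemp h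
        exact_mod_cast this
      calc ENNReal.ofReal ((α + 2) / 2) ≤ (2 : ℝ≥0∞) := by
            rw [show (2 : ℝ≥0∞) = ENNReal.ofReal 2 by norm_num]
            exact ENNReal.ofReal_le_ofReal (by linarith)
        _ ≤ ENNReal.ofReal (α / 2) * (c u v : ℝ≥0∞)
              + (temporalDist (profLab s) u v : ℝ≥0∞) := le_add_left h2
  have hsumkey :
      ∑ u : Fin n, ∑ v : Fin n, (if u = v then 0 else ENNReal.ofReal ((α + 2) / 2))
        ≤ ∑ u : Fin n, ∑ v : Fin n,
            (ENNReal.ofReal (α / 2) * (c u v : ℝ≥0∞)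
              + (temporalDist (profLab s) u v : ℝ≥0∞)) :=
    Finset.sum_le_sum fun u _ => Finset.sum_le_sum fun v _ => key u v
  rw [sum_ite_offdiag, Fintype.card_fin] at hsumkey
  have hrhs : ∑ u : Fin n, ∑ v : Fin n,
      (ENNReal.ofReal (α / 2) * (c u v : ℝ≥0∞) + (temporalDist (profLab s) u v : ℝ≥0∞))
      = ENNReal.ofReal (α / 2) * (S : ℝ≥0∞)
        + ∑ u : Fin n, ∑ v : Fin n, (temporalDist (profLab s) u v : ℝ≥0∞) := by
    rw [hSdef]
    push_cast
    rw [Finset.mul_sum]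
    rw [← Finset.sum_add_distrib]
    refine Finset.sum_congr rfl fun u _ => ?_
    rw [Finset.mul_sum, ← Finset.sum_add_distrib]
  have hco : ENNReal.ofReal (α / 2) * (S : ℝ≥0∞) = ENNReal.ofReal α * (numLabels s : ℝ≥0∞) := by
    rw [hS2, ← mul_assoc]
    congr 1
    rw [show (2 : ℝ≥0∞) = ENNReal.ofReal 2 by norm_num,
      ← ENNReal.ofReal_mul (by positivity)]
    congr 1; ring
  rw [hrhs, hco] at hsumkey
  rw [target_eq hn α]
  exact hsumkey

end Main
/-- For every atomic cost `0 < α ≤ 2` and every number of players `n ≥ 2`, the optimal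
social cost is `(α+2)·n(n-1)/2`, and it is achieved by any strategy profile whose
communication temporal graph is the complete graph `K_n` with any simple labelling
(i.e. every pair of distinct vertices is joined by an edge carrying exactly one time
label). -/
theorem statement_6 (α : ℝ) (hα0 : 0 < α) (hα2 : α ≤ 2) (n : ℕ) (hn : 2 ≤ n) :
    optCost α n = ENNReal.ofReal ((α + 2) * (n : ℝ) * ((n : ℝ) - 1) / 2) ∧
      ∀ s : Fin n → Finset (Fin n × ℕ),
        (∀ u v : Fin n, u ≠ v → (labelFinset s u v).card = 1) →
        socialCost α s = optCost α n := by
  classical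
  have hn1 : 1 ≤ n := by omega
  set s₀ : Fin n → Finset (Fin n × ℕ) := fun _ => Finset.univ.image (fun u => (u, 0)) with hs₀def
  have hs₀ : ∀ u v : Fin n, u ≠ v → (labelFinset s₀ u v).card = 1 := by
    intro u v h
    have he : labelFinset s₀ u v = {0} := by
      ext t
      simp [mem_labelFinset, hs₀def, Finset.mem_image, Prod.mk.injEq, eq_comm]
    rw [he]; rfl
  have hopt : optCost α n = ENNReal.ofReal ((α + 2) * (n : ℝ) * ((n : ℝ) - 1) / 2) :=
    le_antisymm
      (le_trans (iInf_le _ s₀) (le_of_eq (socialCost_eq_of_simple hn1 α hα0.le s₀ hs₀)))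
      (le_iInf fun s => le_socialCost hn1 α hα0 hα2 s)
  exact ⟨hopt, fun s hs => by rw [socialCost_eq_of_simple hn1 α hα0.le s hs, hopt]⟩
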